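/- arXiv:2002.00636 — 9 statements merged into one kernel-verified Lean document; each statement's English description precedes it below -/
import Mathlib

section
/- Let p ≥ q ≥ 1 and n ≥ 1. For any real p×q matrix B, the (np+q)-square matrix D and the (np+q)-square matrix C ⊕ 0_{(n-1)(p-q)} are cospectral, i.e., they have the same characteristic polynomial (after transporting along a bijection between their index types, which have equal cardinality np+q). -/
open Matrix

/-- The matrix `C` of Construction I: indexed by `Fin p ⊕ (Fin n × Fin q)`,
first block row `[0, B, B, …, B]`, first block column its transpose, other blocks zero. -/
def matC (p q n : ℕ) (B : Matrix (Fin p) (Fin q) ℝ) :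
    Matrix (Fin p ⊕ Fin n × Fin q) (Fin p ⊕ Fin n × Fin q) ℝ :=
  Matrix.of fun a b =>
    match a, b with
    | Sum.inl i, Sum.inr (_, j) => B i j
    | Sum.inr (_, j), Sum.inl i => B i j
    | _, _ => 0

/-- The matrix `D` of Construction I: indexed by `Fin q ⊕ (Fin n × Fin p)`,
first block row `[0, Bᵀ, Bᵀ, …, Bᵀ]`, first block column its transpose, other blocks zero. -/
def matD (p q n : ℕ) (B : Matrix (Fin p) (Fin q) ℝ) :
    Matrix (Fin q ⊕ Fin n × Fin p) (Fin q ⊕ Fin n × Fin p) ℝ :=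
  Matrix.of fun a b =>
    match a, b with
    | Sum.inl j, Sum.inr (_, i) => B i j
    | Sum.inr (_, i), Sum.inl j => B i j
    | _, _ => 0

/-- Auxiliary 0/1 matrix `E`. -/
def matE (p q n : ℕ) :
    Matrix (Fin q ⊕ Fin n × Fin p) (Fin p ⊕ Fin n × Fin q) ℝ :=
  Matrix.of fun a b =>
    match a, b with
    | Sum.inl j, Sum.inr (_, j') => if j = j' then 1 else 0
    | Sum.inr (_, i), Sum.inl i' => if i = i' then 1 else 0
    | _, _ => 0

/-- Auxiliary matrix `F`, linear in `B`. -/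
def matF (p q n : ℕ) (B : Matrix (Fin p) (Fin q) ℝ) :
    Matrix (Fin p ⊕ Fin n × Fin q) (Fin q ⊕ Fin n × Fin p) ℝ :=
  Matrix.of fun a b =>
    match a, b with
    | Sum.inl i, Sum.inl j => B i j
    | Sum.inr (k, j), Sum.inr (k', i) => if k = k' then B i j else 0
    | _, _ => 0

lemma matE_mul_matF (p q n : ℕ) (B : Matrix (Fin p) (Fin q) ℝ) :
    matE p q n * matF p q n B = matD p q n B := by
  ext a b
  rcases a with j | ⟨k, i⟩ <;> rcases b with j' | ⟨k', i'⟩ <;>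
    simp [matE, matF, matD, Matrix.mul_apply, Fintype.sum_sum_type, Fintype.sum_prod_type,
      ite_and]

lemma matF_mul_matE (p q n : ℕ) (B : Matrix (Fin p) (Fin q) ℝ) :
    matF p q n B * matE p q n = matC p q n B := by
  ext a b
  rcases a with i | ⟨k, j⟩ <;> rcases b with i' | ⟨k', j'⟩ <;>
    simp [matE, matF, matC, Matrix.mul_apply, Fintype.sum_sum_type, Fintype.sum_prod_type,
      ite_and]

lemma charpolyRev_mul_comm {α β : Type*} [Fintype α] [Fintype β] [DecidableEq α]
    [DecidableEq β] (A : Matrix α β ℝ) (B : Matrix β α ℝ) :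
    (A * B).charpolyRev = (B * A).charpolyRev := by
  unfold Matrix.charpolyRev
  rw [Matrix.map_mul, Matrix.map_mul, ← Matrix.smul_mul, Matrix.det_one_sub_mul_comm,
    Matrix.mul_smul]

lemma reflect_reflect {R : Type*} [Semiring R] (N : ℕ) (f : Polynomial R) :
    (f.reflect N).reflect N = f := by
  ext i
  rw [Polynomial.coeff_reflect, Polynomial.coeff_reflect, Polynomial.revAt_invol]

lemma zero_charpoly {α : Type*} [Fintype α] [DecidableEq α] :
    (0 : Matrix α α ℝ).charpoly = Polynomial.X ^ Fintype.card α := by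
  rw [Matrix.charpoly, Matrix.charmatrix]
  simp [Matrix.det_smul]

/-- Construction I: `D` and `C ⊕ 0_{(n-1)(p-q)}` are cospectral. -/
theorem construction_I_cospectral (p q n : ℕ) (hq : 1 ≤ q) (hpq : q ≤ p) (hn : 1 ≤ n)
    (B : Matrix (Fin p) (Fin q) ℝ) :
    ∃ e : (Fin q ⊕ Fin n × Fin p) ≃ ((Fin p ⊕ Fin n × Fin q) ⊕ Fin ((n - 1) * (p - q))),
      (matD p q n B).charpoly =
        ((Matrix.fromBlocks (matC p q n B) 0 0
            (0 : Matrix (Fin ((n - 1) * (p - q))) (Fin ((n - 1) * (p - q))) ℝ)).submatrix e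
          e).charpoly := by
  classical
  obtain ⟨d, rfl⟩ : ∃ d, p = q + d := ⟨p - q, by omega⟩
  obtain ⟨n', rfl⟩ : ∃ n', n = n' + 1 := ⟨n - 1, by omega⟩
  have hm : (n' + 1 - 1) * (q + d - q) = n' * d := by simp
  have hcard : Fintype.card (Fin q ⊕ Fin (n' + 1) × Fin (q + d))
      = Fintype.card ((Fin (q + d) ⊕ Fin (n' + 1) × Fin q) ⊕
          Fin ((n' + 1 - 1) * (q + d - q))) := by
    simp [hm]; try ring
  refine ⟨Fintype.equivOfCardEq hcard, ?_⟩
  rw [show ∀ (M : Matrix ((Fin (q + d) ⊕ Fin (n' + 1) × Fin q) ⊕ Fin ((n' + 1 - 1) * (q + d - q)))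
        ((Fin (q + d) ⊕ Fin (n' + 1) × Fin q) ⊕ Fin ((n' + 1 - 1) * (q + d - q))) ℝ)
        (e : (Fin q ⊕ Fin (n' + 1) × Fin (q + d)) ≃ _),
      M.submatrix e e = Matrix.reindex e.symm e.symm M from fun _ _ => rfl,
    Matrix.charpoly_reindex]
  have hblock : (Matrix.fromBlocks (matC (q + d) q (n' + 1) B) 0 0
        (0 : Matrix (Fin ((n' + 1 - 1) * (q + d - q))) (Fin ((n' + 1 - 1) * (q + d - q))) ℝ)).charpoly
      = (matC (q + d) q (n' + 1) B).charpoly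
          * Polynomial.X ^ ((n' + 1 - 1) * (q + d - q)) := by
    rw [Matrix.charpoly_fromBlocks_zero₂₁, zero_charpoly]
    simp
  rw [hblock]
  have hrev : (matD (q + d) q (n' + 1) B).charpolyRev
      = (matC (q + d) q (n' + 1) B).charpolyRev := by
    rw [← matE_mul_matF (q + d) q (n' + 1) B, ← matF_mul_matE (q + d) q (n' + 1) B,
      charpolyRev_mul_comm]
  set N : ℕ := q + (n' + 1) * (q + d) with hN
  have hD : (matD (q + d) q (n' + 1) B).charpoly.natDegree = N := by
    rw [Matrix.charpoly_natDegree_eq_dim]; simp [hN]; try ring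
  have hC : (matC (q + d) q (n' + 1) B).charpoly.natDegree = (q + d) + (n' + 1) * q := by
    rw [Matrix.charpoly_natDegree_eq_dim]; simp
  have hNN : N = ((q + d) + (n' + 1) * q) + (n' + 1 - 1) * (q + d - q) := by
    simp [hN, hm]; try ring
  have key : (matD (q + d) q (n' + 1) B).charpoly.reflect N
      = ((matC (q + d) q (n' + 1) B).charpoly
          * Polynomial.X ^ ((n' + 1 - 1) * (q + d - q))).reflect N := by
    have h1 : (matD (q + d) q (n' + 1) B).charpoly.reflect N
        = (matD (q + d) q (n' + 1) B).charpoly.reverse := by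
      rw [Polynomial.reverse, hD]
    have h2 : ((matC (q + d) q (n' + 1) B).charpoly
          * Polynomial.X ^ ((n' + 1 - 1) * (q + d - q))).reflect N
        = (matC (q + d) q (n' + 1) B).charpoly.reverse := by
      rw [hNN, Polynomial.reflect_mul _ _ (le_of_eq hC)
          (le_of_eq (Polynomial.natDegree_X_pow _)),
        Polynomial.reflect_monomial, Polynomial.revAt_le (le_refl _),
        Nat.sub_self, pow_zero, mul_one, Polynomial.reverse, hC]
    rw [h1, h2, Matrix.reverse_charpoly, Matrix.reverse_charpoly, hrev]
  have h3 := congrArg (fun f => Polynomial.reflect N f) key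
  simpa only [reflect_reflect] using h3
end

section
/- Let B be a real p×q matrix and n ≥ 1. If x ∈ ℝ^p and y ∈ ℝ^q satisfy B y = λ x and Bᵀ x = λ y (i.e., (x,y) is an eigenvector of the block matrix [[0, B],[Bᵀ, 0]] with eigenvalue λ), then the vector v indexed by Fin p ⊕ (Fin n × Fin q), with v(inl i) = √n · x i and v(inr (k,j)) = y j for all k, satisfies C · v = (√n · λ) · v. -/
open Matrix

/-- If `(x, y)` is an eigenvector of `[[0, B], [Bᵀ, 0]]` with eigenvalue `λ`, then
`(√n·x, y, …, y)` is an eigenvector of `C` with eigenvalue `√n·λ`. -/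
theorem matC_eigenvector (p q n : ℕ) (hn : 1 ≤ n) (B : Matrix (Fin p) (Fin q) ℝ)
    (x : Fin p → ℝ) (y : Fin q → ℝ) (l : ℝ)
    (hBy : B *ᵥ y = l • x) (hBTx : Bᵀ *ᵥ x = l • y) :
    matC p q n B *ᵥ Sum.elim (fun i => Real.sqrt n * x i) (fun kj => y kj.2) =
      (Real.sqrt n * l) • Sum.elim (fun i => Real.sqrt n * x i) (fun kj => y kj.2) := by
  have hs : Real.sqrt n * Real.sqrt n = (n : ℝ) :=
    Real.mul_self_sqrt (Nat.cast_nonneg n)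
  funext a
  cases a with
  | inl i =>
    have h1 : (B *ᵥ y) i = l * x i := by rw [hBy]; rfl
    simp only [mulVec, dotProduct, matC, Matrix.of_apply, Fintype.sum_sum_type,
      Fintype.sum_prod_type, Pi.smul_apply, Sum.elim_inl, Sum.elim_inr, smul_eq_mul]
    simp only [zero_mul, Finset.sum_const_zero, zero_add]
    have : ∀ k : Fin n, ∑ j : Fin q, B i j * y j = l * x i := fun k => by
      simpa [mulVec, dotProduct] using h1
    rw [Finset.sum_congr rfl (fun k _ => this k), Finset.sum_const, Finset.card_univ,
      Fintype.card_fin, nsmul_eq_mul]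
    have h3 : Real.sqrt n * l * (Real.sqrt n * x i)
        = (Real.sqrt n * Real.sqrt n) * (l * x i) := by ring
    rw [h3, hs]
  | inr kj =>
    have h2 : (Bᵀ *ᵥ x) kj.2 = l * y kj.2 := by rw [hBTx]; rfl
    simp only [mulVec, dotProduct, transpose_apply] at h2
    simp only [mulVec, dotProduct, matC, Matrix.of_apply, Fintype.sum_sum_type,
      Fintype.sum_prod_type, Pi.smul_apply, Sum.elim_inr, Sum.elim_inl, smul_eq_mul]
    obtain ⟨k, j⟩ := kj
    simp only [zero_mul, Finset.sum_const_zero, add_zero]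
    calc ∑ i : Fin p, B i j * (Real.sqrt n * x i)
        = Real.sqrt n * ∑ i : Fin p, B i j * x i := by
          rw [Finset.mul_sum]; congr 1; funext i; ring
      _ = Real.sqrt n * l * y j := by rw [h2]; ring
end

section
/- Let p ≥ q ≥ 1 and n ≥ 1, and let B be a real p×q matrix with nonnegative entries such that every row of B and every column of B contains a positive entry. Then the matrices L(C) ⊕ I_{(n-1)(p-q)} and L(D) are cospectral, i.e., these two (np+q)-square matrices have the same characteristic polynomial (after transporting along a bijection of their index types). -/
open Matrix Polynomial

/-- The normalized Laplacian `L(M) = I − Δ^{-1/2} M Δ^{-1/2}` of a matrix `M`, where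
`Δ^{-1/2}` is the diagonal matrix of reciprocal square roots of the row sums of `M`. -/
noncomputable def normLap {ι : Type} [Fintype ι] [DecidableEq ι] (M : Matrix ι ι ℝ) :
    Matrix ι ι ℝ :=
  1 - Matrix.diagonal (fun i => (Real.sqrt (∑ j, M i j))⁻¹) * M *
      Matrix.diagonal (fun i => (Real.sqrt (∑ j, M i j))⁻¹)

/-! ### Auxiliary lemmas -/

lemma my_eval_charpoly {ι : Type*} [Fintype ι] [DecidableEq ι] (M : Matrix ι ι ℝ) (x : ℝ) :
    M.charpoly.eval x = (x • (1 : Matrix ι ι ℝ) - M).det := by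
  rw [Matrix.charpoly, ← Polynomial.coe_evalRingHom, RingHom.map_det]
  congr 1
  ext i j
  by_cases h : i = j <;>
    simp [h, charmatrix_apply, Matrix.one_apply, Matrix.diagonal_apply, Matrix.sub_apply]

lemma det_bip {a ι : Type} [Fintype a] [DecidableEq a] [Fintype ι] [DecidableEq ι]
    (F : Matrix a ι ℝ) (y : ℝ) (hy : y ≠ 0) :
    (fromBlocks (y • (1 : Matrix a a ℝ)) F Fᵀ (y • (1 : Matrix ι ι ℝ))).det
      = y ^ (Fintype.card ι) * (y • (1 : Matrix a a ℝ) - y⁻¹ • (F * Fᵀ)).det := by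
  haveI : Invertible (y • (1 : Matrix ι ι ℝ)) :=
    ⟨y⁻¹ • 1, by rw [smul_mul_smul_comm, inv_mul_cancel₀ hy, one_mul, one_smul],
      by rw [smul_mul_smul_comm, mul_inv_cancel₀ hy, one_mul, one_smul]⟩
  rw [Matrix.det_fromBlocks₂₂]
  have h1 : ⅟ (y • (1 : Matrix ι ι ℝ)) = y⁻¹ • 1 :=
    invOf_eq_right_inv (by rw [smul_mul_smul_comm, mul_inv_cancel₀ hy, one_mul, one_smul])
  rw [h1]
  congr 1
  · simp [Matrix.det_smul]
  · congr 1
    rw [Matrix.mul_smul, Matrix.mul_one, Matrix.smul_mul]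

lemma det_swap_aux {p q : ℕ} (A : Matrix (Fin p) (Fin q) ℝ) (y : ℝ) (hy : y ≠ 0) :
    y ^ q * (y • (1 : Matrix (Fin p) (Fin p) ℝ) - y⁻¹ • (A * Aᵀ)).det
      = y ^ p * (y • (1 : Matrix (Fin q) (Fin q) ℝ) - y⁻¹ • (Aᵀ * A)).det := by
  have hyy : y * (y⁻¹ * y⁻¹) = y⁻¹ := by field_simp
  have key : ∀ (m k : ℕ) (M : Matrix (Fin m) (Fin k) ℝ),
      (y • (1 : Matrix (Fin m) (Fin m) ℝ) - y⁻¹ • (M * Mᵀ)).det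
        = y ^ m * (1 - (y⁻¹ * y⁻¹) • (M * Mᵀ)).det := by
    intro m k M
    have h2 : y • (1 : Matrix (Fin m) (Fin m) ℝ) - y⁻¹ • (M * Mᵀ)
        = y • ((1 : Matrix (Fin m) (Fin m) ℝ) - (y⁻¹ * y⁻¹) • (M * Mᵀ)) := by
      rw [smul_sub, smul_smul, hyy]
    rw [h2, Matrix.det_smul]
    simp
  rw [key p q A]
  have h4 := key q p Aᵀ
  rw [Matrix.transpose_transpose] at h4
  rw [h4]
  have h3 : ((1 : Matrix (Fin p) (Fin p) ℝ) - (y⁻¹ * y⁻¹) • (A * Aᵀ)).det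
      = ((1 : Matrix (Fin q) (Fin q) ℝ) - (y⁻¹ * y⁻¹) • (Aᵀ * A)).det := by
    rw [← Matrix.smul_mul, Matrix.det_one_sub_mul_comm, Matrix.mul_smul]
  rw [h3]
  ring

lemma normLap_apply {ι : Type} [Fintype ι] [DecidableEq ι] (M : Matrix ι ι ℝ) (a b : ι) :
    normLap M a b = (1 : Matrix ι ι ℝ) a b
      - (Real.sqrt (∑ c, M a c))⁻¹ * M a b * (Real.sqrt (∑ c, M b c))⁻¹ := by
  simp [normLap, Matrix.sub_apply, Matrix.mul_diagonal, Matrix.diagonal_mul]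

section
variable (p q n : ℕ) (B : Matrix (Fin p) (Fin q) ℝ)

lemma matD_rowsum_inl (j : Fin q) :
    ∑ b, matD p q n B (Sum.inl j) b = n * ∑ i, B i j := by
  rw [Fintype.sum_sum_type]
  simp [matD, Fintype.sum_prod_type]

lemma matD_rowsum_inr (k : Fin n) (i : Fin p) :
    ∑ b, matD p q n B (Sum.inr (k, i)) b = ∑ j, B i j := by
  rw [Fintype.sum_sum_type]
  simp [matD]

lemma matC_rowsum_inl (i : Fin p) :
    ∑ b, matC p q n B (Sum.inl i) b = n * ∑ j, B i j := by
  rw [Fintype.sum_sum_type]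
  simp [matC, Fintype.sum_prod_type]

lemma matC_rowsum_inr (k : Fin n) (j : Fin q) :
    ∑ b, matC p q n B (Sum.inr (k, j)) b = ∑ i, B i j := by
  rw [Fintype.sum_sum_type]
  simp [matC]

/-- The normalized biadjacency matrix `Â` with `Â i j = B i j / (√(rowsum i) √(colsum j))`. -/
noncomputable def Ahat : Matrix (Fin p) (Fin q) ℝ :=
  Matrix.of fun i j =>
    (Real.sqrt (∑ j', B i j'))⁻¹ * B i j * (Real.sqrt (∑ i', B i' j))⁻¹

noncomputable def FD : Matrix (Fin q) (Fin n × Fin p) ℝ :=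
  Matrix.of fun j ki =>
    (Real.sqrt (∑ b, matD p q n B (Sum.inl j) b))⁻¹ * B ki.2 j *
      (Real.sqrt (∑ b, matD p q n B (Sum.inr ki) b))⁻¹

noncomputable def FC : Matrix (Fin p) (Fin n × Fin q) ℝ :=
  Matrix.of fun i kj =>
    (Real.sqrt (∑ b, matC p q n B (Sum.inl i) b))⁻¹ * B i kj.2 *
      (Real.sqrt (∑ b, matC p q n B (Sum.inr kj) b))⁻¹

lemma hblockD (x : ℝ) :
    x • (1 : Matrix (Fin q ⊕ Fin n × Fin p) (Fin q ⊕ Fin n × Fin p) ℝ)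
        - normLap (matD p q n B)
      = fromBlocks ((x - 1) • 1) (FD p q n B) (FD p q n B)ᵀ ((x - 1) • 1) := by
  have e1 : ∀ j j', matD p q n B (Sum.inl j) (Sum.inl j') = 0 := fun _ _ => rfl
  have e2 : ∀ j k i, matD p q n B (Sum.inl j) (Sum.inr (k, i)) = B i j := fun _ _ _ => rfl
  have e3 : ∀ k i j, matD p q n B (Sum.inr (k, i)) (Sum.inl j) = B i j := fun _ _ _ => rfl
  have e4 : ∀ k i k' i', matD p q n B (Sum.inr (k, i)) (Sum.inr (k', i')) = 0 :=
    fun _ _ _ _ => rfl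
  ext a b
  rcases a with j | ⟨k, i⟩ <;> rcases b with j' | ⟨k', i'⟩ <;>
    simp only [Matrix.sub_apply, Matrix.smul_apply, normLap_apply, e1, e2, e3, e4,
      Matrix.fromBlocks_apply₁₁, Matrix.fromBlocks_apply₁₂, Matrix.fromBlocks_apply₂₁,
      Matrix.fromBlocks_apply₂₂, Matrix.transpose_apply, Matrix.one_apply, Sum.inl.injEq,
      Sum.inr.injEq, smul_eq_mul, FD, Matrix.of_apply, reduceCtorEq, if_false] <;>
    first | (split_ifs <;> ring) | ring

lemma hblockC (x : ℝ) :
    x • (1 : Matrix (Fin p ⊕ Fin n × Fin q) (Fin p ⊕ Fin n × Fin q) ℝ)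
        - normLap (matC p q n B)
      = fromBlocks ((x - 1) • 1) (FC p q n B) (FC p q n B)ᵀ ((x - 1) • 1) := by
  have e1 : ∀ i i', matC p q n B (Sum.inl i) (Sum.inl i') = 0 := fun _ _ => rfl
  have e2 : ∀ i k j, matC p q n B (Sum.inl i) (Sum.inr (k, j)) = B i j := fun _ _ _ => rfl
  have e3 : ∀ k j i, matC p q n B (Sum.inr (k, j)) (Sum.inl i) = B i j := fun _ _ _ => rfl
  have e4 : ∀ k j k' j', matC p q n B (Sum.inr (k, j)) (Sum.inr (k', j')) = 0 :=
    fun _ _ _ _ => rfl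
  ext a b
  rcases a with i | ⟨k, j⟩ <;> rcases b with i' | ⟨k', j'⟩ <;>
    simp only [Matrix.sub_apply, Matrix.smul_apply, normLap_apply, e1, e2, e3, e4,
      Matrix.fromBlocks_apply₁₁, Matrix.fromBlocks_apply₁₂, Matrix.fromBlocks_apply₂₁,
      Matrix.fromBlocks_apply₂₂, Matrix.transpose_apply, Matrix.one_apply, Sum.inl.injEq,
      Sum.inr.injEq, smul_eq_mul, FC, Matrix.of_apply, reduceCtorEq, if_false] <;>
    first | (split_ifs <;> ring) | ring

lemma FDmul (hn : 1 ≤ n) :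
    FD p q n B * (FD p q n B)ᵀ = (Ahat p q B)ᵀ * Ahat p q B := by
  have hn0 : (0 : ℝ) ≤ n := n.cast_nonneg
  have hnne : (n : ℝ) ≠ 0 := Nat.cast_ne_zero.mpr (by omega)
  have hs : Real.sqrt n ≠ 0 := by
    rw [Real.sqrt_ne_zero hn0]; exact hnne
  have hss : Real.sqrt n * Real.sqrt n = n := Real.mul_self_sqrt hn0
  ext j j'
  rw [Matrix.mul_apply, Matrix.mul_apply, Fintype.sum_prod_type]
  simp only [Matrix.transpose_apply, FD, Matrix.of_apply, matD_rowsum_inl, matD_rowsum_inr]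
  rw [Finset.sum_const, Finset.card_univ, Fintype.card_fin, nsmul_eq_mul, Finset.mul_sum]
  refine Finset.sum_congr rfl fun i _ => ?_
  simp only [Ahat, Matrix.transpose_apply, Matrix.of_apply]
  rw [Real.sqrt_mul hn0, Real.sqrt_mul hn0, mul_inv, mul_inv]
  have key : (n : ℝ) * ((Real.sqrt n)⁻¹ * (Real.sqrt n)⁻¹) = 1 := by
    rw [← hss]; field_simp; rw [Real.sqrt_sq (Real.sqrt_nonneg _)]
  calc (n : ℝ) * ((Real.sqrt n)⁻¹ * (Real.sqrt (∑ i', B i' j))⁻¹ * B i j *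
        (Real.sqrt (∑ j'', B i j''))⁻¹ *
        ((Real.sqrt n)⁻¹ * (Real.sqrt (∑ i', B i' j'))⁻¹ * B i j' *
          (Real.sqrt (∑ j'', B i j''))⁻¹))
      = ((n : ℝ) * ((Real.sqrt n)⁻¹ * (Real.sqrt n)⁻¹)) *
        ((Real.sqrt (∑ i', B i' j))⁻¹ * B i j * (Real.sqrt (∑ j'', B i j''))⁻¹ *
          ((Real.sqrt (∑ i', B i' j'))⁻¹ * B i j' * (Real.sqrt (∑ j'', B i j''))⁻¹)) := by
        ring
    _ = _ := by rw [key]; ring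

lemma FCmul (hn : 1 ≤ n) :
    FC p q n B * (FC p q n B)ᵀ = Ahat p q B * (Ahat p q B)ᵀ := by
  have hn0 : (0 : ℝ) ≤ n := n.cast_nonneg
  have hnne : (n : ℝ) ≠ 0 := Nat.cast_ne_zero.mpr (by omega)
  have hs : Real.sqrt n ≠ 0 := by
    rw [Real.sqrt_ne_zero hn0]; exact hnne
  have hss : Real.sqrt n * Real.sqrt n = n := Real.mul_self_sqrt hn0
  ext i i'
  rw [Matrix.mul_apply, Matrix.mul_apply, Fintype.sum_prod_type]
  simp only [Matrix.transpose_apply, FC, Matrix.of_apply, matC_rowsum_inl, matC_rowsum_inr]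
  rw [Finset.sum_const, Finset.card_univ, Fintype.card_fin, nsmul_eq_mul, Finset.mul_sum]
  refine Finset.sum_congr rfl fun j _ => ?_
  simp only [Ahat, Matrix.transpose_apply, Matrix.of_apply]
  rw [Real.sqrt_mul hn0, Real.sqrt_mul hn0, mul_inv, mul_inv]
  have key : (n : ℝ) * ((Real.sqrt n)⁻¹ * (Real.sqrt n)⁻¹) = 1 := by
    rw [← hss]; field_simp; rw [Real.sqrt_sq (Real.sqrt_nonneg _)]
  calc (n : ℝ) * ((Real.sqrt n)⁻¹ * (Real.sqrt (∑ j', B i j'))⁻¹ * B i j *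
        (Real.sqrt (∑ i'', B i'' j))⁻¹ *
        ((Real.sqrt n)⁻¹ * (Real.sqrt (∑ j', B i' j'))⁻¹ * B i' j *
          (Real.sqrt (∑ i'', B i'' j))⁻¹))
      = ((n : ℝ) * ((Real.sqrt n)⁻¹ * (Real.sqrt n)⁻¹)) *
        ((Real.sqrt (∑ j', B i j'))⁻¹ * B i j * (Real.sqrt (∑ i'', B i'' j))⁻¹ *
          ((Real.sqrt (∑ j', B i' j'))⁻¹ * B i' j * (Real.sqrt (∑ i'', B i'' j))⁻¹)) := by
        ring
    _ = _ := by rw [key]; ring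

end

/-- Construction I for normalized Laplacians: `L(C) ⊕ I_{(n-1)(p-q)}` and `L(D)` are
cospectral. -/
theorem construction_I_normLap_cospectral (p q n : ℕ) (hq : 1 ≤ q) (hpq : q ≤ p) (hn : 1 ≤ n)
    (B : Matrix (Fin p) (Fin q) ℝ) (hB : ∀ i j, 0 ≤ B i j)
    (hrow : ∀ i, ∃ j, 0 < B i j) (hcol : ∀ j, ∃ i, 0 < B i j) :
    ∃ e : (Fin q ⊕ Fin n × Fin p) ≃ ((Fin p ⊕ Fin n × Fin q) ⊕ Fin ((n - 1) * (p - q))),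
      (normLap (matD p q n B)).charpoly =
        ((Matrix.fromBlocks (normLap (matC p q n B)) 0 0
            (1 : Matrix (Fin ((n - 1) * (p - q))) (Fin ((n - 1) * (p - q))) ℝ)).submatrix e
          e).charpoly := by
  have hcard : Fintype.card (Fin q ⊕ Fin n × Fin p)
      = Fintype.card ((Fin p ⊕ Fin n × Fin q) ⊕ Fin ((n - 1) * (p - q))) := by
    simp only [Fintype.card_sum, Fintype.card_prod, Fintype.card_fin]
    cases' Nat.exists_eq_add_of_le hn with m hm
    cases' Nat.exists_eq_add_of_le hpq with d hd
    subst hm hd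
    have h1 : 1 + m - 1 = m := by omega
    have h2 : q + d - q = d := by omega
    rw [h1, h2]
    ring
  obtain ⟨e⟩ := Fintype.card_eq.mp hcard
  refine ⟨e, ?_⟩
  have hsub : ((Matrix.fromBlocks (normLap (matC p q n B)) 0 0
        (1 : Matrix (Fin ((n - 1) * (p - q))) (Fin ((n - 1) * (p - q))) ℝ)).submatrix e e)
      = Matrix.reindex e.symm e.symm (Matrix.fromBlocks (normLap (matC p q n B)) 0 0 1) := rfl
  rw [hsub, Matrix.charpoly_reindex]
  apply Polynomial.eq_of_infinite_eval_eq
  apply Set.Infinite.mono (s := ({1}ᶜ : Set ℝ))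
  swap
  · exact (Set.finite_singleton (1 : ℝ)).infinite_compl
  intro x hx
  have hy : x - 1 ≠ 0 := sub_ne_zero.mpr (by simpa using hx)
  set y : ℝ := x - 1 with hydef
  simp only [Set.mem_setOf_eq]
  rw [my_eval_charpoly, my_eval_charpoly]
  -- RHS block-triangular split
  have hR : x • (1 : Matrix ((Fin p ⊕ Fin n × Fin q) ⊕ Fin ((n - 1) * (p - q)))
        ((Fin p ⊕ Fin n × Fin q) ⊕ Fin ((n - 1) * (p - q))) ℝ)
        - Matrix.fromBlocks (normLap (matC p q n B)) 0 0 1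
      = Matrix.fromBlocks (x • 1 - normLap (matC p q n B)) 0 0 (y • 1) := by
    rw [← Matrix.fromBlocks_one, Matrix.fromBlocks_smul, sub_eq_add_neg,
      Matrix.fromBlocks_neg, Matrix.fromBlocks_add, ← sub_eq_add_neg, ← sub_eq_add_neg]
    have h : x • (1 : Matrix (Fin ((n - 1) * (p - q))) (Fin ((n - 1) * (p - q))) ℝ) + -1
        = y • 1 := by
      rw [hydef, sub_smul, one_smul, sub_eq_add_neg]
    rw [smul_zero, sub_zero, neg_zero, add_zero, h, smul_zero]
  rw [hR, Matrix.det_fromBlocks_zero₂₁]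
  -- now rewrite both normLap determinants via the bipartite structure
  rw [hblockD p q n B x, hblockC p q n B x, ← hydef, det_bip _ y hy, det_bip _ y hy,
    FDmul p q n B hn, FCmul p q n B hn]
  rw [Matrix.det_smul, Matrix.det_one, mul_one]
  simp only [Fintype.card_prod, Fintype.card_fin]
  -- final scalar computation
  set A := Ahat p q B
  set Dq := (y • (1 : Matrix (Fin q) (Fin q) ℝ) - y⁻¹ • (Aᵀ * A)).det
  set Dp := (y • (1 : Matrix (Fin p) (Fin p) ℝ) - y⁻¹ • (A * Aᵀ)).det
  have hswap : y ^ q * Dp = y ^ p * Dq := det_swap_aux A y hy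
  have hyq : y ^ q ≠ 0 := pow_ne_zero _ hy
  apply mul_left_cancel₀ hyq
  have harith : q + n * p = n * q + p + (n - 1) * (p - q) := by
    cases' Nat.exists_eq_add_of_le hn with m hm
    cases' Nat.exists_eq_add_of_le hpq with d hd
    subst hm hd
    have h1 : 1 + m - 1 = m := by omega
    have h2 : q + d - q = d := by omega
    rw [h1, h2]
    ring
  calc y ^ q * (y ^ (n * p) * Dq) = y ^ (q + n * p) * Dq := by rw [pow_add]; ring
    _ = y ^ (n * q + (n - 1) * (p - q)) * (y ^ p * Dq) := by rw [harith, pow_add, pow_add]; ring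
    _ = y ^ (n * q + (n - 1) * (p - q)) * (y ^ q * Dp) := by rw [hswap]
    _ = y ^ q * (y ^ (n * q) * Dp * y ^ ((n - 1) * (p - q))) := by rw [pow_add]; ring
end

section
/- Let B be a real p×q matrix, G a symmetric real q×q matrix, and G' a symmetric real p×p matrix, and let A = [[G', B, B],[Bᵀ, 0, G],[Bᵀ, G, 0]]. If x ∈ ℝ^p and y, z ∈ ℝ^q satisfy A · (x, y, z) = λ · (x, y, z), then G · (z − y) = −λ · (z − y); consequently, either y = z or −λ is an eigenvalue of G. -/
open Matrix

/-- The matrix `A = [[G', B, B], [Bᵀ, 0, G], [Bᵀ, G, 0]]` of Construction II,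
indexed by `Fin p ⊕ (Fin q ⊕ Fin q)`. -/
def matA (p q : ℕ) (B : Matrix (Fin p) (Fin q) ℝ) (G : Matrix (Fin q) (Fin q) ℝ)
    (G' : Matrix (Fin p) (Fin p) ℝ) :
    Matrix (Fin p ⊕ (Fin q ⊕ Fin q)) (Fin p ⊕ (Fin q ⊕ Fin q)) ℝ :=
  Matrix.fromBlocks G' (Matrix.fromCols B B) (Matrix.fromRows Bᵀ Bᵀ)
    (Matrix.fromBlocks 0 G G 0)

/-- If `(x, y, z)` is an eigenvector of `A` with eigenvalue `λ`, then
`G (z − y) = −λ (z − y)`; consequently either `y = z` or `−λ` is an eigenvalue of `G`. -/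
theorem key_observation (p q : ℕ) (B : Matrix (Fin p) (Fin q) ℝ)
    (G : Matrix (Fin q) (Fin q) ℝ) (G' : Matrix (Fin p) (Fin p) ℝ)
    (hG : G.IsSymm) (hG' : G'.IsSymm)
    (x : Fin p → ℝ) (y z : Fin q → ℝ) (l : ℝ)
    (hev : matA p q B G G' *ᵥ Sum.elim x (Sum.elim y z) =
      l • Sum.elim x (Sum.elim y z)) :
    G *ᵥ (z - y) = (-l) • (z - y) ∧
      (y = z ∨ ∃ w : Fin q → ℝ, w ≠ 0 ∧ G *ᵥ w = (-l) • w) := by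
  unfold matA at hev
  rw [fromBlocks_mulVec, fromBlocks_mulVec, fromRows_mulVec] at hev
  have key : G *ᵥ (z - y) = (-l) • (z - y) := by
    funext i
    have hy := congrFun hev (Sum.inr (Sum.inl i))
    have hz := congrFun hev (Sum.inr (Sum.inr i))
    simp [mulVec_sub, zero_mulVec] at hy hz ⊢
    linarith
  refine ⟨key, ?_⟩
  by_cases h : y = z
  · exact Or.inl h
  · exact Or.inr ⟨z - y, fun hw => h (sub_eq_zero.mp hw).symm, key⟩
end

section
/- Let B be a real p×q matrix, G a symmetric real q×q matrix, and G' a symmetric real p×p matrix. Let A = [[G', B, B],[Bᵀ, 0, G],[Bᵀ, G, 0]] (a (p+2q)-square matrix) and C = [[G, Bᵀ, Bᵀ],[B, 0, G'],[B, G', 0]] (a (2p+q)-square matrix). Then the (3p+3q)-square matrices A ⊕ [[0, G'],[G', 0]] ⊕ G and C ⊕ [[0, G],[G, 0]] ⊕ G' are cospectral, i.e., they have the same characteristic polynomial (after transporting along a bijection of their index types). -/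
open Matrix

/-- The matrix `C = [[G, Bᵀ, Bᵀ], [B, 0, G'], [B, G', 0]]` of Construction II,
indexed by `Fin q ⊕ (Fin p ⊕ Fin p)`. -/
def matC2 (p q : ℕ) (B : Matrix (Fin p) (Fin q) ℝ) (G : Matrix (Fin q) (Fin q) ℝ)
    (G' : Matrix (Fin p) (Fin p) ℝ) :
    Matrix (Fin q ⊕ (Fin p ⊕ Fin p)) (Fin q ⊕ (Fin p ⊕ Fin p)) ℝ :=
  Matrix.fromBlocks G (Matrix.fromCols Bᵀ Bᵀ) (Matrix.fromRows B B)
    (Matrix.fromBlocks 0 G' G' 0)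

namespace ConstructionIIAux

open Polynomial

variable {n m : Type*} [Fintype n] [DecidableEq n] [Fintype m] [DecidableEq m]

/-- The characteristic polynomial is invariant under conjugation. -/
lemma charpoly_conj_aux {R : Type*} [CommRing R] (Q Q' M : Matrix n n R)
    (h1 : Q * Q' = 1) : (Q * M * Q').charpoly = M.charpoly := by
  have hmapQ : Q.map C * Q'.map C = 1 := by
    rw [← Matrix.map_mul, h1]
    exact Matrix.map_one _ (map_zero C) (map_one C)
  have key : charmatrix (Q * M * Q') = Q.map C * charmatrix M * Q'.map C := by
    unfold charmatrix
    simp only [RingHom.mapMatrix_apply]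
    rw [mul_sub, sub_mul]
    congr 1
    · rw [← (scalar_commute (X : R[X]) (Commute.all _) (Q.map C)).eq, mul_assoc, hmapQ, mul_one]
    · rw [Matrix.map_mul, Matrix.map_mul]
  rw [Matrix.charpoly, key, det_mul, det_mul, mul_right_comm, ← det_mul, hmapQ, det_one, one_mul]
  rfl

lemma charpoly_transpose_aux {R : Type*} [CommRing R] (M : Matrix n n R) :
    Mᵀ.charpoly = M.charpoly := by
  have h : charmatrix Mᵀ = (charmatrix M)ᵀ := by
    ext i j
    by_cases h : i = j
    · subst h; simp
    · simp [h, Ne.symm h]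
  rw [Matrix.charpoly, h, det_transpose, Matrix.charpoly]

lemma charpoly_submatrix_equiv {R : Type*} [CommRing R] (M : Matrix n n R) (e : m ≃ n) :
    (M.submatrix e e).charpoly = M.charpoly := by
  rw [show M.submatrix e e = reindex e.symm e.symm M from rfl, charpoly_reindex]

/-- The charpoly of `[[0, Y], [Y, 0]]` is `charpoly Y * charpoly (-Y)`. -/
lemma double_charpoly (Y : Matrix n n ℝ) :
    (fromBlocks 0 Y Y 0).charpoly = Y.charpoly * (-Y).charpoly := by
  have h1 : (fromBlocks 1 1 1 (-1) : Matrix (n ⊕ n) (n ⊕ n) ℝ) *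
      ((2:ℝ)⁻¹ • fromBlocks 1 1 1 (-1)) = 1 := by
    ext (i|j) (i'|j') <;>
      simp [Matrix.mul_apply, Fintype.sum_sum_type, fromBlocks, Matrix.one_apply, mul_ite,
        ite_mul, Finset.sum_ite_eq, Finset.sum_ite_eq'] <;> split_ifs <;> norm_num
  have hconj : (fromBlocks 1 1 1 (-1) : Matrix (n ⊕ n) (n ⊕ n) ℝ) * (fromBlocks 0 Y Y 0) *
      ((2:ℝ)⁻¹ • fromBlocks 1 1 1 (-1)) = fromBlocks Y 0 0 (-Y) := by
    ext (i|j) (i'|j') <;>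
      simp [Matrix.mul_apply, Fintype.sum_sum_type, fromBlocks, Matrix.one_apply, mul_ite,
        ite_mul, Finset.sum_ite_eq, Finset.sum_ite_eq', Finset.mul_sum,
        Finset.sum_add_distrib] <;> ring
  rw [← charpoly_conj_aux _ _ _ h1, hconj, charpoly_fromBlocks_zero₁₂]

/-- The main block reduction. -/
lemma key_charpoly (M : Matrix m m ℝ) (B1 : Matrix m n ℝ) (B2 : Matrix n m ℝ)
    (G : Matrix n n ℝ) :
    (fromBlocks M (fromCols B1 B1) (fromRows B2 B2) (fromBlocks 0 G G 0)).charpoly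
      = (fromBlocks M B1 (2 • B2) G).charpoly * (-G).charpoly := by
  have h1 : (fromBlocks 1 0 0 (fromBlocks 1 1 1 (-1)) :
        Matrix (m ⊕ (n ⊕ n)) (m ⊕ (n ⊕ n)) ℝ) *
      (fromBlocks 1 0 0 ((2:ℝ)⁻¹ • fromBlocks 1 1 1 (-1))) = 1 := by
    ext (i|j|k) (i'|j'|k') <;>
      simp [Matrix.mul_apply, Fintype.sum_sum_type, fromBlocks, Matrix.one_apply, mul_ite,
        ite_mul, Finset.sum_ite_eq, Finset.sum_ite_eq'] <;> split_ifs <;> norm_num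
  have hconj : (fromBlocks 1 0 0 (fromBlocks 1 1 1 (-1)) :
        Matrix (m ⊕ (n ⊕ n)) (m ⊕ (n ⊕ n)) ℝ) *
      (fromBlocks M (fromCols B1 B1) (fromRows B2 B2) (fromBlocks 0 G G 0)) *
      (fromBlocks 1 0 0 ((2:ℝ)⁻¹ • fromBlocks 1 1 1 (-1)))
      = fromBlocks M (fromCols B1 0) (fromRows (2 • B2) 0) (fromBlocks G 0 0 (-G)) := by
    ext (i|j|k) (i'|j'|k') <;>
      simp [Matrix.mul_apply, Fintype.sum_sum_type, fromBlocks, fromCols, fromRows_apply_inl, fromRows_apply_inr,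
        Matrix.one_apply, mul_ite, ite_mul, Finset.sum_ite_eq, Finset.sum_ite_eq',
        Finset.mul_sum, Finset.sum_add_distrib, two_smul] <;> ring
  rw [← charpoly_conj_aux _ _ _ h1, hconj,
    ← charpoly_submatrix_equiv _ (Equiv.sumAssoc m n n)]
  have hre : (fromBlocks M (fromCols B1 0) (fromRows (2 • B2) 0)
        (fromBlocks G 0 0 (-G))).submatrix (Equiv.sumAssoc m n n) (Equiv.sumAssoc m n n)
      = fromBlocks (fromBlocks M B1 (2 • B2) G) 0 0 (-G) := by
    ext ((i|j)|k) ((i'|j')|k') <;>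
      simp [fromBlocks, fromCols, fromRows_apply_inl, fromRows_apply_inr, Equiv.sumAssoc]
  rw [hre, charpoly_fromBlocks_zero₁₂]

end ConstructionIIAux

open ConstructionIIAux in
/-- Construction II: `A ⊕ [[0, G'], [G', 0]] ⊕ G` and `C ⊕ [[0, G], [G, 0]] ⊕ G'` are
cospectral. -/
theorem construction_II_cospectral (p q : ℕ) (B : Matrix (Fin p) (Fin q) ℝ)
    (G : Matrix (Fin q) (Fin q) ℝ) (G' : Matrix (Fin p) (Fin p) ℝ)
    (hG : G.IsSymm) (hG' : G'.IsSymm) :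
    ∃ e : (((Fin p ⊕ (Fin q ⊕ Fin q)) ⊕ (Fin p ⊕ Fin p)) ⊕ Fin q) ≃
        (((Fin q ⊕ (Fin p ⊕ Fin p)) ⊕ (Fin q ⊕ Fin q)) ⊕ Fin p),
      (Matrix.fromBlocks
          (Matrix.fromBlocks (matA p q B G G') 0 0 (Matrix.fromBlocks 0 G' G' 0)) 0 0
          G).charpoly =
        ((Matrix.fromBlocks
            (Matrix.fromBlocks (matC2 p q B G G') 0 0 (Matrix.fromBlocks 0 G G 0)) 0 0
            G').submatrix e e).charpoly := by
  have ecard : Fintype.card (((Fin p ⊕ (Fin q ⊕ Fin q)) ⊕ (Fin p ⊕ Fin p)) ⊕ Fin q)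
      = Fintype.card (((Fin q ⊕ (Fin p ⊕ Fin p)) ⊕ (Fin q ⊕ Fin q)) ⊕ Fin p) := by
    simp [Fintype.card_sum]; ring
  refine ⟨Fintype.equivOfCardEq ecard, ?_⟩
  rw [charpoly_submatrix_equiv]
  rw [Matrix.charpoly_fromBlocks_zero₁₂, Matrix.charpoly_fromBlocks_zero₁₂,
    Matrix.charpoly_fromBlocks_zero₁₂, Matrix.charpoly_fromBlocks_zero₁₂]
  unfold matA matC2
  rw [key_charpoly, key_charpoly, double_charpoly, double_charpoly]
  have hM : (fromBlocks G' B (2 • Bᵀ) G).charpoly = (fromBlocks G Bᵀ (2 • B) G').charpoly := by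
    rw [← charpoly_transpose_aux (fromBlocks G' B (2 • Bᵀ) G),
      ← charpoly_submatrix_equiv _ (Equiv.sumComm (Fin q) (Fin p))]
    congr 1
    ext (j|i) (j'|i') <;>
      simp [fromBlocks, Equiv.sumComm, hG.apply, hG'.apply]
  rw [hM]
  ring
end

section
/- Let B be a real p×q matrix with p ≥ q, and let n ≥ 1. Let M be the (p+q)-square block matrix [[0, n·B],[Bᵀ, (n−1)·I_q]]. Then for every λ ∈ ℝ, det(λ·I_{p+q} − M) = λ^{p−q} · det((λ² − (n−1)λ)·I_q − n·(BᵀB)). -/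
open Matrix

/-- Schur-complement determinant identity for `M = [[0, n·B], [Bᵀ, (n−1)·I_q]]`:
`det(λI − M) = λ^{p−q} · det((λ² − (n−1)λ)I − n·BᵀB)`. -/
theorem schur_det_C (p q n : ℕ) (hpq : q ≤ p) (hn : 1 ≤ n)
    (B : Matrix (Fin p) (Fin q) ℝ) (l : ℝ) :
    (l • (1 : Matrix (Fin p ⊕ Fin q) (Fin p ⊕ Fin q) ℝ) -
        Matrix.fromBlocks 0 ((n : ℝ) • B) Bᵀ (((n : ℝ) - 1) • 1)).det =
      l ^ (p - q) *
        ((l ^ 2 - ((n : ℝ) - 1) * l) • (1 : Matrix (Fin q) (Fin q) ℝ) -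
          (n : ℝ) • (Bᵀ * B)).det := by
  set f : ℝ → ℝ := fun l =>
    (l • (1 : Matrix (Fin p ⊕ Fin q) (Fin p ⊕ Fin q) ℝ) -
        Matrix.fromBlocks 0 ((n : ℝ) • B) Bᵀ (((n : ℝ) - 1) • 1)).det with hf
  set g : ℝ → ℝ := fun l =>
    l ^ (p - q) *
        ((l ^ 2 - ((n : ℝ) - 1) * l) • (1 : Matrix (Fin q) (Fin q) ℝ) -
          (n : ℝ) • (Bᵀ * B)).det with hg
  have key : ∀ x : ℝ, x ≠ 0 → f x = g x := by
    intro x hx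
    have hA : (x • (1 : Matrix (Fin p) (Fin p) ℝ)) *
        (x⁻¹ • (1 : Matrix (Fin p) (Fin p) ℝ)) = 1 := by
      rw [smul_mul_smul_comm, one_mul, mul_inv_cancel₀ hx, one_smul]
    have hA' : (x⁻¹ • (1 : Matrix (Fin p) (Fin p) ℝ)) *
        (x • (1 : Matrix (Fin p) (Fin p) ℝ)) = 1 := by
      rw [smul_mul_smul_comm, one_mul, inv_mul_cancel₀ hx, one_smul]
    letI : Invertible (x • (1 : Matrix (Fin p) (Fin p) ℝ)) := ⟨_, hA', hA⟩
    have hinv : ⅟ (x • (1 : Matrix (Fin p) (Fin p) ℝ)) =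
        x⁻¹ • (1 : Matrix (Fin p) (Fin p) ℝ) := invOf_eq_right_inv hA
    have hblk : x • (1 : Matrix (Fin p ⊕ Fin q) (Fin p ⊕ Fin q) ℝ) -
        Matrix.fromBlocks 0 ((n : ℝ) • B) Bᵀ (((n : ℝ) - 1) • 1) =
        Matrix.fromBlocks (x • 1) (-((n : ℝ) • B)) (-Bᵀ)
          (x • 1 - ((n : ℝ) - 1) • 1) := by
      rw [← fromBlocks_one, fromBlocks_smul]
      ext (i|i) (j|j) <;> simp [Matrix.fromBlocks]
    have hschur : (x • (1 : Matrix (Fin q) (Fin q) ℝ) - ((n : ℝ) - 1) • 1) -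
        (-Bᵀ) * ⅟ (x • (1 : Matrix (Fin p) (Fin p) ℝ)) * (-((n : ℝ) • B)) =
        (x⁻¹) • ((x ^ 2 - ((n : ℝ) - 1) * x) • (1 : Matrix (Fin q) (Fin q) ℝ) -
          (n : ℝ) • (Bᵀ * B)) := by
      rw [hinv, smul_sub, smul_smul, smul_smul]
      have h1 : x⁻¹ * (x ^ 2 - ((n : ℝ) - 1) * x) = x - ((n : ℝ) - 1) := by
        field_simp
      rw [h1, ← sub_smul]
      congr 1
      rw [Matrix.mul_smul, Matrix.mul_one, Matrix.smul_mul, Matrix.neg_mul,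
        Matrix.mul_neg, neg_neg, Matrix.mul_smul, smul_smul]
    have hdet : f x = x ^ p * (x⁻¹ ^ q *
        ((x ^ 2 - ((n : ℝ) - 1) * x) • (1 : Matrix (Fin q) (Fin q) ℝ) -
          (n : ℝ) • (Bᵀ * B)).det) := by
      rw [hf]
      simp only
      rw [hblk, Matrix.det_fromBlocks₁₁, hschur, Matrix.det_smul, Matrix.det_smul,
        Matrix.det_one, mul_one]
      simp [Fintype.card_fin]
    rw [hdet, hg]
    simp only
    rw [← mul_assoc]
    congr 1
    rw [inv_pow, ← div_eq_mul_inv]; exact (pow_sub₀ x hx hpq).symm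
  have hcf : Continuous f := by
    apply Continuous.matrix_det
    exact (continuous_id.smul continuous_const).sub continuous_const
  have hcg : Continuous g := by
    apply Continuous.mul (continuous_pow _)
    apply Continuous.matrix_det
    exact (((continuous_pow 2).sub (continuous_const.mul continuous_id)).smul
      continuous_const).sub continuous_const
  have := hcf.ext_on (dense_compl_singleton (0 : ℝ)) hcg
    (fun x hx => key x (by simpa using hx))
  exact congrFun this l
end

section
/- Let B be a real p×q matrix with p ≥ q, and let n ≥ 1. Let M be the (q+p)-square block matrix [[0, n·Bᵀ],[B, (n−1)·I_p]]. Then for every λ ∈ ℝ, det(λ·I_{q+p} − M) = (λ − (n−1))^{p−q} · det((λ² − (n−1)λ)·I_q − n·(BᵀB)). -/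
open Matrix

lemma schur_det_D_aux (p q n : ℕ) (hpq : q ≤ p)
    (B : Matrix (Fin p) (Fin q) ℝ) (l : ℝ) (ht : l - ((n : ℝ) - 1) ≠ 0) :
    (l • (1 : Matrix (Fin q ⊕ Fin p) (Fin q ⊕ Fin p) ℝ) -
        Matrix.fromBlocks 0 ((n : ℝ) • Bᵀ) B (((n : ℝ) - 1) • 1)).det =
      (l - ((n : ℝ) - 1)) ^ (p - q) *
        ((l ^ 2 - ((n : ℝ) - 1) * l) • (1 : Matrix (Fin q) (Fin q) ℝ) -
          (n : ℝ) • (Bᵀ * B)).det := by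
  set t : ℝ := l - ((n : ℝ) - 1) with htdef
  have h1 : l • (1 : Matrix (Fin q ⊕ Fin p) (Fin q ⊕ Fin p) ℝ) -
      Matrix.fromBlocks 0 ((n : ℝ) • Bᵀ) B (((n : ℝ) - 1) • 1) =
      Matrix.fromBlocks (l • 1) (-((n : ℝ) • Bᵀ)) (-B) (t • 1) := by
    rw [← Matrix.fromBlocks_one, Matrix.fromBlocks_smul]
    ext (i | i) (j | j) <;>
      simp [Matrix.fromBlocks, Matrix.sub_apply, Matrix.smul_apply, htdef, sub_smul]
  haveI : Invertible (t • (1 : Matrix (Fin p) (Fin p) ℝ)) :=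
    ⟨t⁻¹ • 1, by rw [smul_mul_smul_comm, one_mul, inv_mul_cancel₀ ht, one_smul],
      by rw [smul_mul_smul_comm, one_mul, mul_inv_cancel₀ ht, one_smul]⟩
  have hinv : ⅟(t • (1 : Matrix (Fin p) (Fin p) ℝ)) = t⁻¹ • 1 :=
    invOf_eq_right_inv (by rw [smul_mul_smul_comm, one_mul, mul_inv_cancel₀ ht, one_smul])
  rw [h1, Matrix.det_fromBlocks₂₂, hinv]
  have h2 : l • (1 : Matrix (Fin q) (Fin q) ℝ) -
      (-((n : ℝ) • Bᵀ)) * (t⁻¹ • (1 : Matrix (Fin p) (Fin p) ℝ)) * (-B) = l • 1 - ((n : ℝ) * t⁻¹) • (Bᵀ * B) := by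
    simp only [Matrix.neg_mul, Matrix.mul_neg, neg_neg, Matrix.smul_mul, Matrix.mul_smul,
      Matrix.mul_one, smul_smul, mul_smul_comm, smul_mul_assoc, smul_neg, neg_neg]
    rw [mul_comm]
  rw [h2]
  have h3 : (l ^ 2 - ((n : ℝ) - 1) * l) • (1 : Matrix (Fin q) (Fin q) ℝ) -
      (n : ℝ) • (Bᵀ * B) = t • (l • 1 - ((n : ℝ) * t⁻¹) • (Bᵀ * B)) := by
    rw [smul_sub, smul_smul, smul_smul,
      show t * l = l ^ 2 - ((n : ℝ) - 1) * l by rw [htdef]; ring,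
      show t * ((n : ℝ) * t⁻¹) = (n : ℝ) by field_simp]
  rw [h3, Matrix.det_smul, Matrix.det_smul, Matrix.det_one, mul_one]
  rw [← mul_assoc, ← pow_add]
  congr 2
  simp only [Fintype.card_fin]
  omega

/-- Schur-complement determinant identity for `M = [[0, n·Bᵀ], [B, (n−1)·I_p]]`:
`det(λI − M) = (λ − (n−1))^{p−q} · det((λ² − (n−1)λ)I − n·BᵀB)`. -/
theorem schur_det_D (p q n : ℕ) (hpq : q ≤ p) (hn : 1 ≤ n)
    (B : Matrix (Fin p) (Fin q) ℝ) (l : ℝ) :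
    (l • (1 : Matrix (Fin q ⊕ Fin p) (Fin q ⊕ Fin p) ℝ) -
        Matrix.fromBlocks 0 ((n : ℝ) • Bᵀ) B (((n : ℝ) - 1) • 1)).det =
      (l - ((n : ℝ) - 1)) ^ (p - q) *
        ((l ^ 2 - ((n : ℝ) - 1) * l) • (1 : Matrix (Fin q) (Fin q) ℝ) -
          (n : ℝ) • (Bᵀ * B)).det := by
  have key : ∀ x : ℝ, x ≠ (n : ℝ) - 1 →
      (x • (1 : Matrix (Fin q ⊕ Fin p) (Fin q ⊕ Fin p) ℝ) -
        Matrix.fromBlocks 0 ((n : ℝ) • Bᵀ) B (((n : ℝ) - 1) • 1)).det =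
      (x - ((n : ℝ) - 1)) ^ (p - q) *
        ((x ^ 2 - ((n : ℝ) - 1) * x) • (1 : Matrix (Fin q) (Fin q) ℝ) -
          (n : ℝ) • (Bᵀ * B)).det := fun x hx =>
    schur_det_D_aux p q n hpq B x (sub_ne_zero_of_ne hx)
  -- extend by continuity
  have hf : Continuous fun x : ℝ =>
      (x • (1 : Matrix (Fin q ⊕ Fin p) (Fin q ⊕ Fin p) ℝ) -
        Matrix.fromBlocks 0 ((n : ℝ) • Bᵀ) B (((n : ℝ) - 1) • 1)).det :=
    ((continuous_id.smul continuous_const).sub continuous_const).matrix_det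
  have hg : Continuous fun x : ℝ =>
      (x - ((n : ℝ) - 1)) ^ (p - q) *
        ((x ^ 2 - ((n : ℝ) - 1) * x) • (1 : Matrix (Fin q) (Fin q) ℝ) -
          (n : ℝ) • (Bᵀ * B)).det := by
    apply Continuous.mul
    · exact (continuous_id.sub continuous_const).pow _
    · exact (((continuous_pow 2).sub (continuous_const.mul continuous_id)).smul
        continuous_const |>.sub continuous_const).matrix_det
  have := Continuous.ext_on (dense_compl_singleton ((n : ℝ) - 1)) hf hg
    (fun x hx => key x hx)
  exact congrFun this l
end

section
/- Let B be a real p×q matrix, G a symmetric real q×q matrix, and G' a symmetric real p×p matrix. Let A = [[G', B, B],[Bᵀ, 0, G],[Bᵀ, G, 0]] and C = [[G', B, B],[Bᵀ, G, 0],[Bᵀ, 0, G]], both (p+2q)-square matrices. Then the (p+4q)-square matrices A ⊕ [[G, 0],[0, G]] and C ⊕ [[0, G],[G, 0]] are cospectral, i.e., they have the same characteristic polynomial (after transporting along a bijection of their index types). -/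
open Matrix

/-- The matrix `C = [[G', B, B], [Bᵀ, G, 0], [Bᵀ, 0, G]]` of Construction IV,
indexed by `Fin p ⊕ (Fin q ⊕ Fin q)`. -/
def matC4 (p q : ℕ) (B : Matrix (Fin p) (Fin q) ℝ) (G : Matrix (Fin q) (Fin q) ℝ)
    (G' : Matrix (Fin p) (Fin p) ℝ) :
    Matrix (Fin p ⊕ (Fin q ⊕ Fin q)) (Fin p ⊕ (Fin q ⊕ Fin q)) ℝ :=
  Matrix.fromBlocks G' (Matrix.fromCols B B) (Matrix.fromRows Bᵀ Bᵀ)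
    (Matrix.fromBlocks G 0 0 G)

/-- Conjugating by a self-inverse matrix preserves the characteristic polynomial. -/
lemma charpoly_conj_invol {n : Type*} [Fintype n] [DecidableEq n]
    (P M : Matrix n n ℝ) (h : P * P = 1) : (P * M * P).charpoly = M.charpoly := by
  set P' : Matrix n n (Polynomial ℝ) := P.map Polynomial.C with hP'
  have hmap : P' * P' = 1 := by
    rw [hP', ← Matrix.map_mul, h, Matrix.map_one _ (map_zero _) (map_one _)]
  have hsc : P' * Matrix.scalar n (Polynomial.X : Polynomial ℝ) * P' =
      Matrix.scalar n (Polynomial.X : Polynomial ℝ) := by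
    rw [← (Matrix.scalar_commute (Polynomial.X : Polynomial ℝ)
      (fun r' => Commute.all _ r') P').eq, Matrix.mul_assoc, hmap, Matrix.mul_one]
  have hcm : charmatrix (P * M * P) = P' * charmatrix M * P' := by
    unfold charmatrix
    rw [Matrix.mul_sub, Matrix.sub_mul, hsc]
    congr 1
    simp only [RingHom.mapMatrix_apply, Matrix.map_mul, hP', Matrix.mul_assoc]
  unfold Matrix.charpoly
  rw [hcm, Matrix.det_mul, Matrix.det_mul, mul_comm, ← mul_assoc, ← Matrix.det_mul, hmap,
    Matrix.det_one, one_mul]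

/-- Construction IV: `A ⊕ [[G, 0], [0, G]]` and `C ⊕ [[0, G], [G, 0]]` are cospectral. -/
theorem construction_IV_cospectral (p q : ℕ) (B : Matrix (Fin p) (Fin q) ℝ)
    (G : Matrix (Fin q) (Fin q) ℝ) (G' : Matrix (Fin p) (Fin p) ℝ)
    (hG : G.IsSymm) (hG' : G'.IsSymm) :
    ∃ e : ((Fin p ⊕ (Fin q ⊕ Fin q)) ⊕ (Fin q ⊕ Fin q)) ≃
        ((Fin p ⊕ (Fin q ⊕ Fin q)) ⊕ (Fin q ⊕ Fin q)),
      (Matrix.fromBlocks (matA p q B G G') 0 0 (Matrix.fromBlocks G 0 0 G)).charpoly =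
        ((Matrix.fromBlocks (matC4 p q B G G') 0 0
            (Matrix.fromBlocks 0 G G 0)).submatrix e e).charpoly := by
  refine ⟨Equiv.refl _, ?_⟩
  rw [Equiv.coe_refl, Matrix.submatrix_id_id]
  set o : Matrix (Fin q) (Fin q) ℝ := ((1 : ℝ)/2) • (1 : Matrix (Fin q) (Fin q) ℝ) with ho
  have hoo : o * o = ((1:ℝ)/4) • (1 : Matrix (Fin q) (Fin q) ℝ) := by
    rw [ho, Matrix.smul_mul, Matrix.mul_smul, smul_smul, Matrix.one_mul]; norm_num
  have hq : ((1:ℝ)/4) • (1 : Matrix (Fin q) (Fin q) ℝ) +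
      ((1:ℝ)/4) • (1 : Matrix (Fin q) (Fin q) ℝ) = o := by rw [ho]; module
  have hq' : -(((1:ℝ)/4) • (1 : Matrix (Fin q) (Fin q) ℝ)) +
      -(((1:ℝ)/4) • (1 : Matrix (Fin q) (Fin q) ℝ)) = -o := by rw [ho]; module
  have ho1 : o + o = 1 := by rw [ho]; module
  set J : Matrix (Fin q ⊕ Fin q) (Fin q ⊕ Fin q) ℝ := Matrix.fromBlocks o o o o with hJ
  set L : Matrix (Fin q ⊕ Fin q) (Fin q ⊕ Fin q) ℝ :=
    Matrix.fromBlocks o (-o) (-o) o with hL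
  have hJJ : J * J = J := by
    rw [hJ, Matrix.fromBlocks_multiply, hoo, hq]
  have hLL : L * L = L := by
    rw [hL, Matrix.fromBlocks_multiply]
    simp only [Matrix.mul_neg, Matrix.neg_mul, neg_neg, hoo, hq, hq']
  have hJL : J * L = 0 := by
    rw [hJ, hL, Matrix.fromBlocks_multiply]
    simp only [Matrix.mul_neg, hoo]
    simp [Matrix.fromBlocks_zero]
  have hLJ : L * J = 0 := by
    rw [hJ, hL, Matrix.fromBlocks_multiply]
    simp only [Matrix.neg_mul, hoo]
    simp [Matrix.fromBlocks_zero]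
  have hJLone : J + L = 1 := by
    rw [hJ, hL, Matrix.fromBlocks_add, ← Matrix.fromBlocks_one]
    congr 1 <;> simp [ho1]
  set P : Matrix ((Fin p ⊕ (Fin q ⊕ Fin q)) ⊕ (Fin q ⊕ Fin q))
      ((Fin p ⊕ (Fin q ⊕ Fin q)) ⊕ (Fin q ⊕ Fin q)) ℝ :=
    Matrix.fromBlocks (Matrix.fromBlocks 1 0 0 J) (Matrix.fromRows 0 L)
      (Matrix.fromCols 0 L) J with hP
  have hPP : P * P = 1 := by
    rw [hP]
    simp only [Matrix.fromBlocks_multiply, Matrix.fromBlocks_mul_fromRows,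
      Matrix.fromRows_mul_fromCols, Matrix.fromCols_mul_fromRows,
      Matrix.fromCols_mul_fromBlocks, Matrix.fromRows_mul, Matrix.mul_fromCols,
      Matrix.mul_zero, Matrix.zero_mul, Matrix.mul_one, Matrix.one_mul,
      add_zero, zero_add, hJJ, hLL, hLJ, hJL, Matrix.fromRows_zero, Matrix.fromCols_zero,
      Matrix.fromBlocks_zero]
    rw [show (Matrix.fromCols (0 : Matrix (Fin p ⊕ (Fin q ⊕ Fin q)) (Fin p) ℝ)
        (Matrix.fromRows 0 L)) = Matrix.fromBlocks 0 0 0 L by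
        rw [← Matrix.fromRows_zero, Matrix.fromCols_fromRows_eq_fromBlocks]]
    simp [Matrix.fromBlocks_add, hJLone, ho1, Matrix.fromBlocks_one]
    rw [add_comm L J, hJLone, Matrix.fromBlocks_one]
  have hoG : o * G = G * o := by
    rw [ho, Matrix.smul_mul, Matrix.mul_smul, Matrix.one_mul, Matrix.mul_one]
  have hBo : B * o + B * o = B := by
    rw [ho, Matrix.mul_smul, Matrix.mul_one]; module
  have hoBt : o * Bᵀ + o * Bᵀ = Bᵀ := by
    rw [ho, Matrix.smul_mul, Matrix.one_mul]; module
  set M1 := Matrix.fromBlocks (matA p q B G G') 0 0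
      (Matrix.fromBlocks G 0 0 G) with hM1
  set M2 := Matrix.fromBlocks (matC4 p q B G G') 0 0
      (Matrix.fromBlocks 0 G G 0) with hM2
  have hPM : P * M1 = M2 * P := by
    rw [hP, hM1, hM2, matA, matC4]
    simp only [Matrix.fromBlocks_multiply, Matrix.fromBlocks_mul_fromRows,
      Matrix.fromRows_mul_fromCols, Matrix.fromCols_mul_fromRows,
      Matrix.fromCols_mul_fromBlocks, Matrix.fromRows_mul, Matrix.mul_fromCols,
      Matrix.mul_zero, Matrix.zero_mul, Matrix.mul_one, Matrix.one_mul,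
      add_zero, zero_add, Matrix.fromRows_zero, Matrix.fromCols_zero,
      Matrix.fromBlocks_zero, hJ, hL, Matrix.mul_neg, Matrix.neg_mul, neg_neg,
      neg_zero, add_neg_cancel, neg_add_cancel, hoG, hBo, hoBt]
  have key : P * M1 * P = M2 := by
    rw [hPM, Matrix.mul_assoc, hPP, Matrix.mul_one]
  rw [← key, charpoly_conj_invol _ _ hPP]
end

section
/- Let B be a real p×q matrix, let E and F be symmetric real q×q matrices, set G = E + F, and let G' be a symmetric real p×p matrix. Let A = [[G', B, B],[Bᵀ, 0, G],[Bᵀ, G, 0]] and D = [[G', B, B],[Bᵀ, E, F],[Bᵀ, F, E]], both (p+2q)-square matrices. Then the (p+4q)-square matrices A ⊕ [[E, F],[F, E]] and D ⊕ [[0, G],[G, 0]] are cospectral, i.e., they have the same characteristic polynomial (after transporting along a bijection of their index types). -/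
open Matrix

section Helpers
open Polynomial

private lemma charpoly_semiconj' {n : Type*} [DecidableEq n] [Fintype n]
    (P M N : Matrix n n ℝ) (h : P * M = N * P) (hP : P.det ≠ 0) :
    M.charpoly = N.charpoly := by
  have key : P.map C * M.charmatrix = N.charmatrix * P.map C := by
    simp only [charmatrix, RingHom.mapMatrix_apply, mul_sub, sub_mul]
    congr 1
    · exact ((scalar_commute (X : ℝ[X]) (Commute.all _) (P.map C)).eq).symm
    · rw [← Matrix.map_mul, ← Matrix.map_mul, h]
  have hdet := congrArg Matrix.det key
  rw [det_mul, det_mul, show P.map ⇑C = (C : ℝ →+* ℝ[X]).mapMatrix P from rfl,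
    ← RingHom.map_det, mul_comm] at hdet
  have : (C P.det : ℝ[X]) ≠ 0 := by simpa using hP
  exact mul_right_cancel₀ this hdet

private def matS (q : ℕ) : Matrix (Fin q ⊕ Fin q) (Fin q ⊕ Fin q) ℝ :=
  Matrix.fromBlocks 1 1 1 (-1)

private lemma matS_det_ne_zero (q : ℕ) : (matS q).det ≠ 0 := by
  have hSS : matS q * matS q = (2 : ℝ) • 1 := by
    rw [matS, fromBlocks_multiply]
    ext (i|i) (j|j) <;>
      simp [Matrix.fromBlocks, Matrix.one_apply, two_smul, Sum.elim_inl, Sum.elim_inr] <;>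
      split <;> norm_num
  intro h0
  have := congrArg Matrix.det hSS
  rw [det_mul, h0, mul_zero, det_smul, det_one, mul_one] at this
  exact (by positivity : ((2:ℝ) ^ Fintype.card (Fin q ⊕ Fin q)) ≠ 0) this.symm

private lemma corner_semiconj {q : ℕ} (W Z : Matrix (Fin q) (Fin q) ℝ) :
    matS q * Matrix.fromBlocks W Z Z W
      = Matrix.fromBlocks (W + Z) 0 0 (W - Z) * matS q := by
  rw [matS, fromBlocks_multiply, fromBlocks_multiply, fromBlocks_inj]
  refine ⟨by simp; try abel, by simp; try abel, by simp; try abel, by simp; try abel⟩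

private lemma big_semiconj {p q : ℕ} (B : Matrix (Fin p) (Fin q) ℝ)
    (G' : Matrix (Fin p) (Fin p) ℝ) (W Z : Matrix (Fin q) (Fin q) ℝ) :
    Matrix.fromBlocks 1 0 0 (matS q) *
        Matrix.fromBlocks G' (Matrix.fromCols B B) (Matrix.fromRows Bᵀ Bᵀ)
          (Matrix.fromBlocks W Z Z W)
      = Matrix.fromBlocks G' (Matrix.fromCols B 0) (Matrix.fromRows (Bᵀ + Bᵀ) 0)
          (Matrix.fromBlocks (W + Z) 0 0 (W - Z)) *
        Matrix.fromBlocks 1 0 0 (matS q) := by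
  rw [fromBlocks_multiply, fromBlocks_multiply, fromBlocks_inj]
  refine ⟨by simp, ?_, ?_, ?_⟩
  · rw [Matrix.mul_zero, Matrix.zero_mul, Matrix.one_mul, zero_add, matS,
      fromCols_mul_fromBlocks]
    simp
  · rw [Matrix.mul_zero, Matrix.zero_mul, Matrix.mul_one, add_zero, zero_add, matS,
      fromBlocks_mul_fromRows]
    simp
  · rw [Matrix.mul_zero, Matrix.zero_mul, zero_add, zero_add]
    exact corner_semiconj W Z

private lemma charpoly_reind {p q : ℕ} (G' : Matrix (Fin p) (Fin p) ℝ)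
    (Cc : Matrix (Fin p) (Fin q) ℝ) (R : Matrix (Fin q) (Fin p) ℝ)
    (a b : Matrix (Fin q) (Fin q) ℝ) :
    (Matrix.fromBlocks G' (Matrix.fromCols Cc 0) (Matrix.fromRows R 0)
        (Matrix.fromBlocks a 0 0 b)).charpoly
      = (Matrix.fromBlocks G' Cc R a).charpoly * b.charpoly := by
  let e : (Fin p ⊕ (Fin q ⊕ Fin q)) ≃ (Fin p ⊕ Fin q) ⊕ Fin q := (Equiv.sumAssoc _ _ _).symm
  have hre : reindex e e (Matrix.fromBlocks G' (Matrix.fromCols Cc 0)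
      (Matrix.fromRows R 0) (Matrix.fromBlocks a 0 0 b))
      = Matrix.fromBlocks (Matrix.fromBlocks G' Cc R a) 0 0 b := by
    ext ((i|i)|i) ((j|j)|j) <;>
      simp [e, Equiv.sumAssoc, Matrix.fromBlocks, Matrix.fromCols, Matrix.fromRows_apply_inl,
        Matrix.fromRows_apply_inr]
  rw [← charpoly_reindex e, hre, charpoly_fromBlocks_zero₁₂]

end Helpers

/-- The matrix `D = [[G', B, B], [Bᵀ, E, F], [Bᵀ, F, E]]` of the generalization of
Construction IV, indexed by `Fin p ⊕ (Fin q ⊕ Fin q)`. -/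
def matD4 (p q : ℕ) (B : Matrix (Fin p) (Fin q) ℝ) (E F : Matrix (Fin q) (Fin q) ℝ)
    (G' : Matrix (Fin p) (Fin p) ℝ) :
    Matrix (Fin p ⊕ (Fin q ⊕ Fin q)) (Fin p ⊕ (Fin q ⊕ Fin q)) ℝ :=
  Matrix.fromBlocks G' (Matrix.fromCols B B) (Matrix.fromRows Bᵀ Bᵀ)
    (Matrix.fromBlocks E F F E)

/-- Generalization of Construction IV: with `G = E + F`, the matrices
`A ⊕ [[E, F], [F, E]]` and `D ⊕ [[0, G], [G, 0]]` are cospectral. -/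
theorem construction_IV_general_cospectral (p q : ℕ) (B : Matrix (Fin p) (Fin q) ℝ)
    (E F G : Matrix (Fin q) (Fin q) ℝ) (G' : Matrix (Fin p) (Fin p) ℝ)
    (hE : E.IsSymm) (hF : F.IsSymm) (hG' : G'.IsSymm) (hG : G = E + F) :
    ∃ e : ((Fin p ⊕ (Fin q ⊕ Fin q)) ⊕ (Fin q ⊕ Fin q)) ≃
        ((Fin p ⊕ (Fin q ⊕ Fin q)) ⊕ (Fin q ⊕ Fin q)),
      (Matrix.fromBlocks (matA p q B G G') 0 0 (Matrix.fromBlocks E F F E)).charpoly =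
        ((Matrix.fromBlocks (matD4 p q B E F G') 0 0
            (Matrix.fromBlocks 0 G G 0)).submatrix e e).charpoly := by
  subst hG
  refine ⟨Equiv.refl _, ?_⟩
  rw [Equiv.coe_refl, Matrix.submatrix_id_id]
  rw [charpoly_fromBlocks_zero₁₂, charpoly_fromBlocks_zero₁₂]
  have hP : (Matrix.fromBlocks (1 : Matrix (Fin p) (Fin p) ℝ) 0 0 (matS q)).det ≠ 0 := by
    rw [det_fromBlocks_zero₂₁, det_one, one_mul]; exact matS_det_ne_zero q
  have hA : (matA p q B (E + F) G').charpoly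
      = (Matrix.fromBlocks G' B (Bᵀ + Bᵀ) (0 + (E + F))).charpoly * (0 - (E + F)).charpoly := by
    rw [matA, charpoly_semiconj' _ _ _ (big_semiconj B G' 0 (E + F)) hP, charpoly_reind]
  have hD : (matD4 p q B E F G').charpoly
      = (Matrix.fromBlocks G' B (Bᵀ + Bᵀ) (E + F)).charpoly * (E - F).charpoly := by
    rw [matD4, charpoly_semiconj' _ _ _ (big_semiconj B G' E F) hP, charpoly_reind]
  have hK : (Matrix.fromBlocks E F F E).charpoly = (E + F).charpoly * (E - F).charpoly := by
    rw [charpoly_semiconj' _ _ _ (corner_semiconj E F) (matS_det_ne_zero q),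
      charpoly_fromBlocks_zero₁₂]
  have hL : (Matrix.fromBlocks 0 (E + F) (E + F) 0).charpoly
      = (0 + (E + F)).charpoly * (0 - (E + F)).charpoly := by
    rw [charpoly_semiconj' _ _ _ (corner_semiconj 0 (E + F)) (matS_det_ne_zero q),
      charpoly_fromBlocks_zero₁₂]
  rw [hA, hD, hK, hL]
  simp only [zero_add, zero_sub]
  ring
end
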